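/- Let x_{k+1} = c(θ_k)p(x_k) with p(x) = x(1−x), 3/2 ≤ c(θ_k) ≤ 4, and suppose 0 < x_k < 1/100 for 0 ≤ k ≤ N. Then the correction factor C_N = ∏_{k=0}^{N} (1 − 2x_k)/(1 − x_k) satisfies 4/5 ≤ C_N ≤ 1. In particular ∏_{k=0}^{N} c(θ_k)p'(x_k) = C_N · ∏_{k=0}^{N} c(θ_k)(1 − x_k) with C_N ∈ [4/5, 1]. -/

import Mathlib

/-- Weierstrass product inequality: ∏ (1 - a k) ≥ 1 - ∑ a k for a k ∈ [0,1]. -/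
lemma weierstrass_prod (a : ℕ → ℝ) :
    ∀ n : ℕ, (∀ k < n, 0 ≤ a k ∧ a k ≤ 1) →
      1 - ∑ k ∈ Finset.range n, a k ≤ ∏ k ∈ Finset.range n, (1 - a k) := by
  intro n
  induction n with
  | zero => simp
  | succ m ih =>
    intro h
    rw [Finset.prod_range_succ, Finset.sum_range_succ]
    have hih := ih (fun k hk => h k (Nat.lt_succ_of_lt hk))
    have hm := h m (Nat.lt_succ_self m)
    have hs : 0 ≤ ∑ k ∈ Finset.range m, a k :=
      Finset.sum_nonneg (fun k hk => (h k (Nat.lt_succ_of_lt (Finset.mem_range.mp hk))).1)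
    nlinarith [hih, hm.1, hm.2, hs]

/-- The correction factor C_N = ∏_{k=0}^{N} (1−2x_k)/(1−x_k) lies in [4/5, 1]
along an orbit staying in (0, 1/100), and it relates the product of the true
multipliers c·p' to the product of the factors c·(1−x). -/
theorem correction_factor_bounds
    (c : ℕ → ℝ) (hc : ∀ k, 3 / 2 ≤ c k ∧ c k ≤ 4)
    (x : ℕ → ℝ)
    (hiter : ∀ k, x (k + 1) = c k * (x k * (1 - x k)))
    (N : ℕ)
    (hx : ∀ k ≤ N, 0 < x k ∧ x k < 1 / 100) :
    (4 / 5 ≤ ∏ k ∈ Finset.range (N + 1), (1 - 2 * x k) / (1 - x k)) ∧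
    (∏ k ∈ Finset.range (N + 1), (1 - 2 * x k) / (1 - x k)) ≤ 1 ∧
    (∏ k ∈ Finset.range (N + 1), c k * (1 - 2 * x k)) =
      (∏ k ∈ Finset.range (N + 1), (1 - 2 * x k) / (1 - x k)) *
        ∏ k ∈ Finset.range (N + 1), c k * (1 - x k) := by
  -- growth: x k ≤ (4/5) * x (k+1) for k < N
  have hgrow : ∀ k < N, x k ≤ (4/5) * x (k + 1) := by
    intro k hk
    have hxk := hx k hk.le
    have hck := hc k
    rw [hiter k]
    have h99 : (99/100:ℝ) * x k ≤ x k * (1 - x k) := by nlinarith [hxk.1, hxk.2]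
    have h2 : (3/2:ℝ) * ((99/100) * x k) ≤ c k * (x k * (1 - x k)) := by
      apply mul_le_mul hck.1 h99 (by linarith [hxk.1]) (by linarith [hck.1])
    linarith
  -- x k ≤ (4/5)^(N-k) * x N
  have hbound : ∀ k ≤ N, x k ≤ (4/5 : ℝ) ^ (N - k) * x N := by
    intro k hk
    obtain ⟨d, rfl⟩ := Nat.exists_eq_add_of_le hk
    induction d with
    | zero => simp
    | succ e ihe =>
      have h1 : k ≤ k + e := Nat.le_add_right k e
      have h2 : k < k + (e + 1) := by omega
      have := hgrow k h2
      have hstep : ∀ j, k + 1 ≤ j → j ≤ k + (e+1) → x (j-1) ≤ (4/5) * x j := by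
        intro j hj1 hj2
        have := hgrow (j-1) (by omega)
        have : j - 1 + 1 = j := by omega
        simpa [this] using hgrow (j-1) (by omega)
      -- chain: x k ≤ (4/5)^(e+1) x (k+(e+1))
      clear ihe this
      have key : ∀ m : ℕ, (∀ j < m, x (k + j) ≤ (4/5) * x (k + j + 1)) →
          x k ≤ (4/5 : ℝ) ^ m * x (k + m) := by
        intro m
        induction m with
        | zero => simp
        | succ t iht =>
          intro hall
          have h1 := iht (fun j hj => hall j (Nat.lt_succ_of_lt hj))
          have h2 := hall t (Nat.lt_succ_self t)
          have hpow : (0:ℝ) ≤ (4/5:ℝ)^t := by positivity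
          calc x k ≤ (4/5:ℝ)^t * x (k + t) := h1
            _ ≤ (4/5:ℝ)^t * ((4/5) * x (k + t + 1)) := by
                exact mul_le_mul_of_nonneg_left h2 hpow
            _ = (4/5:ℝ)^(t+1) * x (k + (t+1)) := by ring_nf
      have := key (e+1) (fun j hj => by
        have := hgrow (k + j) (by omega)
        simpa using this)
      simpa [Nat.add_sub_cancel_left] using this
  -- define a k = 2 * (4/5)^(N-k) / 100
  set C := ∏ k ∈ Finset.range (N + 1), (1 - 2 * x k) / (1 - x k) with hC
  have hxNpos := (hx N le_rfl).1
  have hxNlt := (hx N le_rfl).2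
  -- each factor bounds
  have hfac : ∀ k ≤ N, (0:ℝ) ≤ (1 - 2 * x k) / (1 - x k) ∧
      (1 - 2 * x k) / (1 - x k) ≤ 1 ∧
      1 - 2 * x k ≤ (1 - 2 * x k) / (1 - x k) := by
    intro k hk
    have hxk := hx k hk
    have h1 : (0:ℝ) < 1 - x k := by linarith [hxk.2]
    have h2 : (0:ℝ) ≤ 1 - 2 * x k := by linarith [hxk.2]
    refine ⟨div_nonneg h2 h1.le, ?_, ?_⟩
    · rw [div_le_one h1]; linarith [hxk.1]
    · rw [le_div_iff₀ h1]; nlinarith [hxk.1]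
  constructor
  · -- lower bound
    have step1 : ∏ k ∈ Finset.range (N+1), (1 - 2 * x k) ≤ C := by
      apply Finset.prod_le_prod
      · intro k hk
        have := hx k (Nat.lt_succ_iff.mp (Finset.mem_range.mp hk))
        linarith [this.2]
      · intro k hk
        exact (hfac k (Nat.lt_succ_iff.mp (Finset.mem_range.mp hk))).2.2
    have step2 : ∏ k ∈ Finset.range (N+1), (1 - (2/100) * (4/5:ℝ)^(N-k)) ≤
        ∏ k ∈ Finset.range (N+1), (1 - 2 * x k) := by
      apply Finset.prod_le_prod
      · intro k hk
        have hp : (4/5:ℝ)^(N-k) ≤ 1 := pow_le_one₀ (by norm_num) (by norm_num)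
        nlinarith
      · intro k hk
        have hk' := Nat.lt_succ_iff.mp (Finset.mem_range.mp hk)
        have := hbound k hk'
        nlinarith [this, hxNlt, pow_nonneg (by norm_num : (0:ℝ) ≤ 4/5) (N-k)]
    have step3 : (9/10 : ℝ) ≤ ∏ k ∈ Finset.range (N+1), (1 - (2/100) * (4/5:ℝ)^(N-k)) := by
      have hW := weierstrass_prod (fun k => (2/100) * (4/5:ℝ)^(N-k)) (N+1)
        (fun k hk => ⟨by positivity, by
          have : (4/5:ℝ)^(N-k) ≤ 1 := pow_le_one₀ (by norm_num) (by norm_num)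
          nlinarith⟩)
      have hsum : ∑ k ∈ Finset.range (N+1), (2/100) * (4/5:ℝ)^(N-k) ≤ 1/10 := by
        rw [← Finset.mul_sum]
        have : ∑ k ∈ Finset.range (N+1), (4/5:ℝ)^(N-k)
            = ∑ j ∈ Finset.range (N+1), (4/5:ℝ)^j := by
          apply Finset.sum_nbij' (fun k => N - k) (fun j => N - j)
          all_goals intro a ha <;> simp_all [Finset.mem_range] <;> omega
        rw [this, geom_sum_eq (by norm_num : (4/5:ℝ) ≠ 1)]
        have h1 : (0:ℝ) ≤ (4/5:ℝ)^(N+1) := by positivity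
        have h2 : ((4/5:ℝ)^(N+1) - 1)/((4/5:ℝ) - 1) = 5*(1 - (4/5:ℝ)^(N+1)) := by ring
        rw [h2]; nlinarith
      linarith [hW, hsum]
    linarith [step1, step2, step3]
  constructor
  · apply Finset.prod_le_one
    · intro k hk
      exact (hfac k (Nat.lt_succ_iff.mp (Finset.mem_range.mp hk))).1
    · intro k hk
      exact (hfac k (Nat.lt_succ_iff.mp (Finset.mem_range.mp hk))).2.1
  · rw [hC, ← Finset.prod_mul_distrib]
    apply Finset.prod_congr rfl
    intro k hk
    have hxk := hx k (Nat.lt_succ_iff.mp (Finset.mem_range.mp hk))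
    have h1 : (1:ℝ) - x k ≠ 0 := by linarith [hxk.2]
    field_simp
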